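/- Let ζ_1, ζ_2, γ : [0, ∞) → ℝ be differentiable functions satisfying the system dζ_1/dt = -sin(ζ_1) sin(ζ_2) cos(2γ + ζ_1 + ζ_2), dζ_2/dt = sin(ζ_2) sin(ζ_1) cos(2γ + ζ_1 + ζ_2), dγ/dt = sin(γ) sin(ζ_1 - ζ_2) cos(γ + ζ_1 + ζ_2), with initial data satisfying ζ_1(0), ζ_2(0), γ(0) ∈ (0, π/4), ζ_1(0) + ζ_2(0) = π/4, and γ(0) ≠ ζ_2(0). Then: if ζ_2(0) > γ(0), there exist constants C, c > 0 such that 0 < ζ_1(t) ≤ C·e^{-ct} for all t ≥ 0, so ζ_1(t) → 0 exponentially as t → ∞; if γ(0) > ζ_2(0), there exist constants C, c > 0 such that 0 < ζ_2(t) ≤ C·e^{-ct} for all t ≥ 0, so ζ_2(t) → 0 exponentially as t → ∞. -/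

import Mathlib

open Real Set

noncomputable def CFE.F (u : ℝ) : ℝ := Real.sin u * Real.sin (π/4 - u)

namespace CFE

lemma abs_sin_le_one' (x : ℝ) : |Real.sin x| ≤ 1 :=
  abs_le.2 ⟨Real.neg_one_le_sin x, Real.sin_le_one x⟩

lemma abs_cos_sub_cos_le (p q : ℝ) : |Real.cos p - Real.cos q| ≤ |p - q| := by
  rw [Real.cos_sub_cos, abs_mul, abs_mul]
  have h1 : |Real.sin ((p+q)/2)| ≤ 1 := abs_sin_le_one' _
  have h2 : |Real.sin ((p-q)/2)| ≤ |(p-q)/2| := Real.abs_sin_le_abs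
  have h3 : |(p-q)/2| = |p-q|/2 := by rw [abs_div]; norm_num
  have h0 : (0:ℝ) ≤ |p - q| := abs_nonneg _
  calc |(-2:ℝ)| * |Real.sin ((p+q)/2)| * |Real.sin ((p-q)/2)|
      ≤ |(-2:ℝ)| * 1 * (|p-q|/2) := by
        apply mul_le_mul _ (h3 ▸ h2) (abs_nonneg _) (by positivity)
        exact mul_le_mul_of_nonneg_left h1 (abs_nonneg _)
    _ = |p - q| := by rw [abs_of_nonpos (by norm_num : (-2:ℝ) ≤ 0)]; ring
  
lemma abs_sin_sub_sin_le (p q : ℝ) : |Real.sin p - Real.sin q| ≤ |p - q| := by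
  rw [Real.sin_sub_sin, abs_mul, abs_mul]
  have h1 : |Real.cos ((p+q)/2)| ≤ 1 := abs_le.2 ⟨Real.neg_one_le_cos _, Real.cos_le_one _⟩
  have h2 : |Real.sin ((p-q)/2)| ≤ |(p-q)/2| := Real.abs_sin_le_abs
  have h3 : |(p-q)/2| = |p-q|/2 := by rw [abs_div]; norm_num
  calc |(2:ℝ)| * |Real.sin ((p-q)/2)| * |Real.cos ((p+q)/2)|
      ≤ |(2:ℝ)| * (|p-q|/2) * 1 := by
        apply mul_le_mul _ h1 (abs_nonneg _) (by positivity)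
        exact mul_le_mul_of_nonneg_left (h3 ▸ h2) (abs_nonneg _)
    _ = |p - q| := by rw [abs_of_nonneg (by norm_num : (0:ℝ) ≤ 2)]; ring

lemma F_eq (u : ℝ) : F u = (Real.cos (2*u - π/4) - Real.cos (π/4)) / 2 := by
  have h1 : ((2*u - π/4) + π/4)/2 = u := by ring
  have h2 : ((2*u - π/4) - π/4)/2 = u - π/4 := by ring
  rw [F, Real.cos_sub_cos, h1, h2]
  have h3 : Real.sin (π/4 - u) = - Real.sin (u - π/4) := by
    rw [show π/4 - u = -(u - π/4) by ring, Real.sin_neg]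
  rw [h3]; ring

lemma hasDerivAt_F (u : ℝ) : HasDerivAt F (Real.sin (π/4 - 2*u)) u := by
  have h2 : HasDerivAt (fun v : ℝ => Real.sin (π/4 - v)) (-Real.cos (π/4 - u)) u := by
    have := ((hasDerivAt_id' u).const_sub (π/4)).sin
    simpa using this
  have := (Real.hasDerivAt_sin u).mul h2
  have e : Real.sin (π/4 - 2*u) = Real.cos u * Real.sin (π/4 - u) + Real.sin u * -Real.cos (π/4 - u) := by
    rw [show π/4 - 2*u = (π/4 - u) - u by ring, Real.sin_sub]; ring
  rw [e]; exact this

lemma F_pos {u : ℝ} (h0 : 0 < u) (h4 : u < π/4) : 0 < F u := by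
  have hπ := Real.pi_pos
  exact mul_pos (Real.sin_pos_of_pos_of_lt_pi h0 (by linarith))
    (Real.sin_pos_of_pos_of_lt_pi (by linarith) (by linarith))

lemma abs_F_le_one (u : ℝ) : |F u| ≤ 1 := by
  rw [F, abs_mul]
  calc |Real.sin u| * |Real.sin (π/4 - u)| ≤ 1 * 1 :=
    mul_le_mul (abs_sin_le_one' _) (abs_sin_le_one' _) (abs_nonneg _) zero_le_one
  _ = 1 := one_mul 1

lemma F_lip (a b : ℝ) : |F a - F b| ≤ |a - b| := by
  rw [F_eq, F_eq]
  have h := abs_cos_sub_cos_le (2*a - π/4) (2*b - π/4)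
  have h2 : (2*a - π/4) - (2*b - π/4) = 2*(a-b) := by ring
  rw [h2, abs_mul] at h
  rw [show (Real.cos (2*a - π/4) - Real.cos (π/4))/2 - (Real.cos (2*b - π/4) - Real.cos (π/4))/2
    = (Real.cos (2*a - π/4) - Real.cos (2*b - π/4))/2 by ring, abs_div]
  rw [abs_of_nonneg (by norm_num : (0:ℝ) ≤ 2)] at *
  linarith [abs_nonneg (a - b)]

lemma F_le_F_pi_div_eight (u : ℝ) : F u ≤ F (π/8) := by
  rw [F_eq, F_eq, show 2*(π/8) - π/4 = 0 by ring, Real.cos_zero]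
  have := Real.cos_le_one (2*u - π/4)
  linarith

lemma F_pi_div_eight_lt : F (π/8) < 1/4 := by
  rw [F_eq, show 2*(π/8) - π/4 = 0 by ring, Real.cos_zero, Real.cos_pi_div_four]
  have h2 : (1:ℝ) < Real.sqrt 2 := by
    nlinarith [Real.sq_sqrt (by norm_num : (0:ℝ) ≤ 2), Real.sqrt_nonneg 2]
  linarith

lemma F_lt_left {a b : ℝ} (ha : 0 ≤ a) (hab : a < b) (hb : b ≤ π/8) : F a < F b := by
  have hπ := Real.pi_pos
  rw [F_eq, F_eq]
  have h1 : Real.cos (2*a - π/4) = Real.cos (π/4 - 2*a) := by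
    rw [show 2*a - π/4 = -(π/4 - 2*a) by ring, Real.cos_neg]
  have h2 : Real.cos (2*b - π/4) = Real.cos (π/4 - 2*b) := by
    rw [show 2*b - π/4 = -(π/4 - 2*b) by ring, Real.cos_neg]
  rw [h1, h2]
  have := Real.strictAntiOn_cos (show (π/4 - 2*b) ∈ Icc 0 π from ⟨by linarith, by linarith⟩)
    (show (π/4 - 2*a) ∈ Icc 0 π from ⟨by linarith, by linarith⟩) (by linarith)
  linarith

lemma F_le_left {a b : ℝ} (ha : 0 ≤ a) (hab : a ≤ b) (hb : b ≤ π/8) : F a ≤ F b := by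
  rcases eq_or_lt_of_le hab with h | h
  · rw [h]
  · exact (F_lt_left ha h hb).le

lemma F_lt_right {a b : ℝ} (ha : π/8 ≤ a) (hab : a < b) (hb : b ≤ π/4) : F b < F a := by
  have hπ := Real.pi_pos
  rw [F_eq, F_eq]
  have := Real.strictAntiOn_cos (show (2*a - π/4) ∈ Icc 0 π from ⟨by linarith, by linarith⟩)
    (show (2*b - π/4) ∈ Icc 0 π from ⟨by linarith, by linarith⟩) (by linarith)
  linarith

lemma sin_mono {a b : ℝ} (ha : -(π/2) ≤ a) (hab : a ≤ b) (hb : b ≤ π/2) :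
    Real.sin a ≤ Real.sin b :=
  Real.strictMonoOn_sin.monotoneOn ⟨ha, by linarith⟩ ⟨by linarith, hb⟩ hab




lemma contOn {w g : ℝ → ℝ} (hw : ∀ t ∈ Ici (0:ℝ), HasDerivWithinAt w (g t) (Ici 0) t) :
    ContinuousOn w (Ici 0) := fun t ht => (hw t ht).continuousWithinAt

lemma hasDerivAt_of_mem {w g : ℝ → ℝ} (hw : ∀ t ∈ Ici (0:ℝ), HasDerivWithinAt w (g t) (Ici 0) t)
    {t : ℝ} (ht : 0 < t) : HasDerivAt w (g t) t :=
  (hw t ht.le).hasDerivAt (Ici_mem_nhds ht)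

lemma monoOn {w g : ℝ → ℝ} {a : ℝ} (ha : 0 ≤ a)
    (hw : ∀ t ∈ Ici (0:ℝ), HasDerivWithinAt w (g t) (Ici 0) t)
    (hg : ∀ t, a < t → 0 ≤ g t) : MonotoneOn w (Ici a) := by
  apply monotoneOn_of_deriv_nonneg (convex_Ici a)
  · exact fun t ht => ((hw t (ha.trans ht)).continuousWithinAt).mono (Ici_subset_Ici.mpr ha)
  · rw [interior_Ici]
    exact fun t ht => (hasDerivAt_of_mem hw (lt_of_le_of_lt ha ht)).differentiableAt.differentiableWithinAt
  · rw [interior_Ici]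
    intro t ht
    rw [(hasDerivAt_of_mem hw (lt_of_le_of_lt ha ht)).deriv]
    exact hg t ht

lemma antiOn {w g : ℝ → ℝ} {a : ℝ} (ha : 0 ≤ a)
    (hw : ∀ t ∈ Ici (0:ℝ), HasDerivWithinAt w (g t) (Ici 0) t)
    (hg : ∀ t, a < t → g t ≤ 0) : AntitoneOn w (Ici a) := by
  apply antitoneOn_of_deriv_nonpos (convex_Ici a)
  · exact fun t ht => ((hw t (ha.trans ht)).continuousWithinAt).mono (Ici_subset_Ici.mpr ha)
  · rw [interior_Ici]
    exact fun t ht => (hasDerivAt_of_mem hw (lt_of_le_of_lt ha ht)).differentiableAt.differentiableWithinAt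
  · rw [interior_Ici]
    intro t ht
    rw [(hasDerivAt_of_mem hw (lt_of_le_of_lt ha ht)).deriv]
    exact hg t ht

lemma monoOnIcc {w g : ℝ → ℝ} {a b : ℝ} (ha : 0 ≤ a)
    (hw : ∀ t ∈ Ici (0:ℝ), HasDerivWithinAt w (g t) (Ici 0) t)
    (hg : ∀ t, a < t → t < b → 0 ≤ g t) : MonotoneOn w (Icc a b) := by
  apply monotoneOn_of_deriv_nonneg (convex_Icc a b)
  · exact fun t ht => ((hw t (ha.trans ht.1)).continuousWithinAt).mono
      (fun u hu => le_trans ha hu.1)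
  · rw [interior_Icc]
    exact fun t ht => (hasDerivAt_of_mem hw (lt_of_le_of_lt ha ht.1)).differentiableAt.differentiableWithinAt
  · rw [interior_Icc]
    intro t ht
    rw [(hasDerivAt_of_mem hw (lt_of_le_of_lt ha ht.1)).deriv]
    exact hg t ht.1 ht.2

/-- positivity persistence -/
lemma pos_persist {w g : ℝ → ℝ} {K : ℝ} (hK : 0 ≤ K)
    (hw : ∀ t ∈ Ici (0:ℝ), HasDerivWithinAt w (g t) (Ici 0) t)
    (hg : ∀ t ∈ Ici (0:ℝ), |g t| ≤ K * |w t|) (h0 : 0 < w 0) :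
    ∀ t ∈ Ici (0:ℝ), 0 < w t := by
  by_contra hcon
  push_neg at hcon
  obtain ⟨T, hT, hwT⟩ := hcon
  set S := {t | t ∈ Icc (0:ℝ) T ∧ w t ≤ 0} with hSdef
  have hwc : ContinuousOn w (Icc 0 T) := (contOn hw).mono (fun u hu => hu.1)
  have hScl : IsClosed S := by
    have hSeq : S = Icc 0 T ∩ w ⁻¹' (Iic 0) := rfl
    rw [hSeq]
    exact hwc.preimage_isClosed_of_isClosed isClosed_Icc isClosed_Iic
  have hSne : S.Nonempty := ⟨T, ⟨hT, le_refl T⟩, hwT⟩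
  have hSbd : BddBelow S := ⟨0, fun u hu => hu.1.1⟩
  set τ := sInf S with hτdef
  have hτS : τ ∈ S := hScl.csInf_mem hSne hSbd
  have hτ0 : 0 ≤ τ := hτS.1.1
  have hwτ : w τ ≤ 0 := hτS.2
  have hτpos : 0 < τ := by
    rcases eq_or_lt_of_le hτ0 with h | h
    · exfalso; rw [← h] at hwτ; linarith
    · exact h
  have hpos : ∀ t, 0 ≤ t → t < τ → 0 < w t := by
    intro t h1 h2
    by_contra h
    push_neg at h
    have htS : t ∈ S := ⟨⟨h1, h2.le.trans hτS.1.2⟩, h⟩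
    have := csInf_le hSbd htS
    linarith
  -- v = w * exp(K t) monotone on Icc 0 τ
  have hmono : MonotoneOn (fun t => w t * Real.exp (K * t)) (Icc 0 τ) := by
    apply monotoneOn_of_deriv_nonneg (convex_Icc 0 τ)
    · exact (hwc.mono (fun u hu => ⟨hu.1, hu.2.trans hτS.1.2⟩)).mul
        (Continuous.continuousOn (by continuity))
    · rw [interior_Icc]
      intro t ht
      exact (((hasDerivAt_of_mem hw ht.1).mul
        ((hasDerivAt_id' t).const_mul K).exp).differentiableAt).differentiableWithinAt
    · rw [interior_Icc]
      intro t ht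
      have hwt : 0 < w t := hpos t ht.1.le ht.2
      have hd := (hasDerivAt_of_mem hw ht.1).mul
        (((hasDerivAt_id' t).const_mul K).exp)
      rw [show deriv (fun t => w t * Real.exp (K * t)) t = _ from hd.deriv]
      have hgt : |g t| ≤ K * w t := by
        have := hg t ht.1.le
        rwa [abs_of_pos hwt] at this
      have h3 : -(K * w t) ≤ g t := neg_le_of_abs_le hgt
      have hE := Real.exp_pos (K * t)
      nlinarith
  have h0m : (0:ℝ) ∈ Icc (0:ℝ) τ := ⟨le_refl 0, hτ0⟩
  have hτm : τ ∈ Icc (0:ℝ) τ := ⟨hτ0, le_refl τ⟩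
  have := hmono h0m hτm hτ0
  simp only [mul_zero, Real.exp_zero, mul_one] at this
  have hE := Real.exp_pos (K * τ)
  nlinarith

/-- exponential decay from a differential inequality -/
lemma decay {w g : ℝ → ℝ} {c t₁ : ℝ} (ht₁ : 0 ≤ t₁)
    (hw : ∀ t ∈ Ici (0:ℝ), HasDerivWithinAt w (g t) (Ici 0) t)
    (hg : ∀ t, t₁ ≤ t → g t ≤ -c * w t) :
    ∀ t, t₁ ≤ t → w t ≤ w t₁ * Real.exp (-c * (t - t₁)) := by
  have hanti : AntitoneOn (fun t => w t * Real.exp (c * t)) (Ici t₁) := by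
    apply antitoneOn_of_deriv_nonpos (convex_Ici t₁)
    · exact (((contOn hw).mono (Ici_subset_Ici.mpr ht₁))).mul
        (Continuous.continuousOn (by continuity))
    · rw [interior_Ici]
      intro t ht
      exact (((hasDerivAt_of_mem hw (lt_of_le_of_lt ht₁ ht)).mul
        ((hasDerivAt_id' t).const_mul c).exp).differentiableAt).differentiableWithinAt
    · rw [interior_Ici]
      intro t ht
      have hd := (hasDerivAt_of_mem hw (lt_of_le_of_lt ht₁ ht)).mul
        (((hasDerivAt_id' t).const_mul c).exp)
      rw [show deriv (fun t => w t * Real.exp (c * t)) t = _ from hd.deriv]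
      have h1 := hg t ht.le
      have hE := Real.exp_pos (c * t)
      nlinarith
  intro t ht
  have := hanti (self_mem_Ici) ht ht
  simp only at this
  have hE := Real.exp_pos (c * t)
  have heq : Real.exp (-c * (t - t₁)) = Real.exp (c * t₁) / Real.exp (c * t) := by
    rw [← Real.exp_sub]; congr 1; ring
  rw [heq, ← mul_div_assoc, le_div_iff₀ hE]
  linarith

/-- Gronwall: zero stays zero -/
lemma eq_zero_persist {R g : ℝ → ℝ}
    (hR : ∀ t ∈ Ici (0:ℝ), HasDerivWithinAt R (g t) (Ici 0) t)
    (hg : ∀ t ∈ Ici (0:ℝ), |g t| ≤ |R t|) (h0 : R 0 = 0) :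
    ∀ t ∈ Ici (0:ℝ), R t = 0 := by
  intro T hT
  have key := norm_le_gronwallBound_of_norm_deriv_right_le (f := R) (f' := g)
    (δ := 0) (K := 1) (ε := 0) (a := 0) (b := T)
    ((contOn hR).mono (fun u hu => hu.1))
    (fun u hu => (hR u hu.1).mono (Ici_subset_Ici.mpr hu.1))
    (by simp [h0])
    (fun u hu => by
      rw [Real.norm_eq_abs, Real.norm_eq_abs, one_mul, add_zero]
      exact hg u hu.1)
  have := key T ⟨hT, le_refl T⟩
  rw [gronwallBound_ε0, Real.norm_eq_abs] at this
  simp only [zero_mul] at this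
  exact abs_eq_zero.mp (le_antisymm this (abs_nonneg _))

/-- integrated lower bound -/
lemma gain {w g : ℝ → ℝ} {r T : ℝ} (hT : 0 ≤ T)
    (hw : ∀ t ∈ Ici (0:ℝ), HasDerivWithinAt w (g t) (Ici 0) t)
    (hg : ∀ t, 0 < t → t < T → r ≤ g t) :
    w 0 + r * T ≤ w T := by
  have hmono : MonotoneOn (fun t => w t - r * t) (Icc 0 T) := by
    apply monotoneOn_of_deriv_nonneg (convex_Icc 0 T)
    · exact (((contOn hw).mono (fun u hu => hu.1))).sub (Continuous.continuousOn (by continuity))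
    · rw [interior_Icc]
      intro t ht
      exact (((hasDerivAt_of_mem hw ht.1).sub
        ((hasDerivAt_id' t).const_mul r)).differentiableAt).differentiableWithinAt
    · rw [interior_Icc]
      intro t ht
      have hd := (hasDerivAt_of_mem hw ht.1).sub ((hasDerivAt_id' t).const_mul r)
      rw [show deriv (fun t => w t - r * t) t = _ from hd.deriv]
      have := hg t ht.1 ht.2
      simp only [mul_one]
      linarith
  have := hmono ⟨le_refl 0, hT⟩ ⟨hT, le_refl T⟩ hT
  simp only [mul_zero, sub_zero] at this
  linarith




lemma sqrt_step {θ η : ℝ} (hθ0 : 0 < θ) (hθ4 : θ ≤ π/4) (hη : 0 < η)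
    (hcos : Real.cos θ ≤ 1 - 2*η) :
    Real.sin (2*Real.sqrt η) ≤ Real.sin θ ∧ 0 < Real.sin (2*Real.sqrt η) := by
  have hπ := Real.pi_pos
  have h1 : 1 - θ^2/2 ≤ Real.cos θ := Real.one_sub_sq_div_two_le_cos
  have h4 : 4*η ≤ θ^2 := by nlinarith
  have hs : Real.sqrt (4*η) ≤ θ := by
    have h6 := Real.sqrt_le_sqrt h4
    rwa [Real.sqrt_sq hθ0.le] at h6
  have h7 : Real.sqrt (4*η) = 2*Real.sqrt η := by
    rw [show (4:ℝ)*η = 2^2*η by ring, Real.sqrt_mul (by positivity),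
      Real.sqrt_sq (by norm_num : (0:ℝ) ≤ 2)]
  have h8 : 2*Real.sqrt η ≤ θ := by rw [← h7]; exact hs
  have h9 : 0 < Real.sqrt η := Real.sqrt_pos.mpr hη
  constructor
  · exact sin_mono (by nlinarith) h8 (by linarith)
  · exact Real.sin_pos_of_pos_of_lt_pi (by positivity) (by linarith)

lemma cos_bound_of_F_le {u q : ℝ} (hF : F u ≤ q * F (π/8)) :
    Real.cos (2*u - π/4) ≤ 1 - 2*((1-q) * F (π/8)) := by
  have h8 : F (π/8) = (1 - Real.cos (π/4))/2 := by
    rw [F_eq, show 2*(π/8) - π/4 = 0 by ring, Real.cos_zero]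
  rw [F_eq] at hF
  nlinarith [h8]

/-- final quantitative decay step -/
lemma endgame {x y : ℝ → ℝ} {t₁ m b : ℝ}
    (hx : ∀ t ∈ Ici (0:ℝ), HasDerivWithinAt x (F (x t) * Real.sin (π/4 - 2 * y t)) (Ici 0) t)
    (hxpos : ∀ t ∈ Ici (0:ℝ), 0 < x t)
    (ht₁ : 0 ≤ t₁) (hm : 0 < m) (hb : 0 < b) (hb4 : b < π/4)
    (hx4 : ∀ t ∈ Ici (0:ℝ), x t < π/4)
    (hxb : ∀ t, t₁ ≤ t → x t ≤ b)
    (hsin : ∀ t, t₁ ≤ t → Real.sin (π/4 - 2 * y t) ≤ -m) :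
    ∃ C c : ℝ, 0 < C ∧ 0 < c ∧ ∀ t ∈ Ici (0:ℝ), 0 < x t ∧ x t ≤ C * Real.exp (-c * t) := by
  have hπ := Real.pi_pos
  set μ := 2/π * Real.sin (π/4 - b) with hμdef
  have hμ : 0 < μ := by
    apply mul_pos (by positivity)
    exact Real.sin_pos_of_pos_of_lt_pi (by linarith) (by linarith)
  set c := m * μ with hcdef
  have hc : 0 < c := mul_pos hm hμ
  have hdec : ∀ t, t₁ ≤ t → F (x t) * Real.sin (π/4 - 2 * y t) ≤ -c * x t := by
    intro t ht
    have ht0 : (0:ℝ) ≤ t := ht₁.trans ht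
    have hxt : 0 < x t := hxpos t ht0
    have hxtb : x t ≤ b := hxb t ht
    have h1 : 2/π * x t ≤ Real.sin (x t) := Real.mul_le_sin hxt.le (by linarith)
    have h2 : Real.sin (π/4 - b) ≤ Real.sin (π/4 - x t) :=
      sin_mono (by linarith) (by linarith) (by linarith)
    have hFl : μ * x t ≤ F (x t) := by
      rw [F, hμdef]
      have hs1 : 0 ≤ Real.sin (π/4 - b) := by
        apply Real.sin_nonneg_of_nonneg_of_le_pi <;> linarith
      have hsx : 0 ≤ Real.sin (x t) := by
        apply Real.sin_nonneg_of_nonneg_of_le_pi <;> linarith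
      have hsx2 : 0 ≤ Real.sin (π/4 - x t) := by
        apply Real.sin_nonneg_of_nonneg_of_le_pi <;> linarith
      nlinarith [mul_le_mul h2 h1 (by positivity) hsx2]
    have hFpos : 0 < F (x t) := F_pos hxt (lt_of_le_of_lt hxtb hb4)
    have hs := hsin t ht
    nlinarith
  have hdecay := decay ht₁ hx hdec
  refine ⟨(π/4) * Real.exp (c * t₁), c, by positivity, hc, ?_⟩
  intro t ht
  refine ⟨hxpos t ht, ?_⟩
  rcases le_or_gt t₁ t with h | h
  · have h1 := hdecay t h
    have h2 : x t₁ ≤ π/4 := (hx4 t₁ ht₁).le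
    have heq : Real.exp (-c * (t - t₁)) = Real.exp (c * t₁) * Real.exp (-c * t) := by
      rw [← Real.exp_add]; congr 1; ring
    calc x t ≤ x t₁ * Real.exp (-c * (t - t₁)) := h1
      _ ≤ (π/4) * Real.exp (-c * (t - t₁)) :=
          mul_le_mul_of_nonneg_right h2 (Real.exp_pos _).le
      _ = (π/4) * Real.exp (c * t₁) * Real.exp (-c * t) := by rw [heq]; ring
  · have h1 : x t < π/4 := hx4 t ht
    have h2 : (1:ℝ) ≤ Real.exp (c * (t₁ - t)) := Real.one_le_exp (by nlinarith)
    have heq : Real.exp (c * t₁) * Real.exp (-c * t) = Real.exp (c * (t₁ - t)) := by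
      rw [← Real.exp_add]; congr 1; ring
    have h3 : (π/4 : ℝ) ≤ π/4 * (Real.exp (c * t₁) * Real.exp (-c * t)) := by
      rw [heq]; nlinarith
    calc x t ≤ π/4 := h1.le
      _ ≤ (π/4) * Real.exp (c * t₁) * Real.exp (-c * t) := by rw [mul_assoc]; exact h3

/-- main lemma for the reduced symmetric system -/
lemma main_lemma {x y : ℝ → ℝ}
    (hx : ∀ t ∈ Ici (0:ℝ), HasDerivWithinAt x (F (x t) * Real.sin (π/4 - 2 * y t)) (Ici 0) t)
    (hy : ∀ t ∈ Ici (0:ℝ), HasDerivWithinAt y (F (y t) * Real.sin (π/4 - 2 * x t)) (Ici 0) t)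
    (hx0 : x 0 ∈ Ioo 0 (π/4)) (hy0 : y 0 ∈ Ioo 0 (π/4)) (hxy0 : x 0 < y 0) :
    ∃ C c : ℝ, 0 < C ∧ 0 < c ∧ ∀ t ∈ Ici (0:ℝ), 0 < x t ∧ x t ≤ C * Real.exp (-c * t) := by
  have hπ := Real.pi_pos
  have habs : ∀ u θ : ℝ, |F u * Real.sin θ| ≤ |u| := by
    intro u θ
    rw [F, abs_mul, abs_mul]
    calc |Real.sin u| * |Real.sin (π/4 - u)| * |Real.sin θ|
        ≤ |u| * 1 * 1 := by
          apply mul_le_mul _ (abs_sin_le_one' _) (abs_nonneg _) (by positivity)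
          exact mul_le_mul Real.abs_sin_le_abs (abs_sin_le_one' _) (abs_nonneg _) (abs_nonneg _)
      _ = |u| := by ring
  have habs' : ∀ u θ : ℝ, |F u * Real.sin θ| ≤ |π/4 - u| := by
    intro u θ
    rw [F, abs_mul, abs_mul]
    calc |Real.sin u| * |Real.sin (π/4 - u)| * |Real.sin θ|
        ≤ 1 * |π/4 - u| * 1 := by
          apply mul_le_mul _ (abs_sin_le_one' _) (abs_nonneg _) (by positivity)
          exact mul_le_mul (abs_sin_le_one' _) Real.abs_sin_le_abs (abs_nonneg _) zero_le_one
      _ = |π/4 - u| := by ring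
  have hxpos : ∀ t ∈ Ici (0:ℝ), 0 < x t := by
    apply pos_persist zero_le_one hx
    · intro t ht; rw [one_mul]; exact habs (x t) _
    · exact hx0.1
  have hypos : ∀ t ∈ Ici (0:ℝ), 0 < y t := by
    apply pos_persist zero_le_one hy
    · intro t ht; rw [one_mul]; exact habs (y t) _
    · exact hy0.1
  have hx4' : ∀ t ∈ Ici (0:ℝ), 0 < π/4 - x t := by
    apply pos_persist zero_le_one (w := fun t => π/4 - x t)
      (g := fun t => -(F (x t) * Real.sin (π/4 - 2 * y t)))
    · exact fun t ht => (hx t ht).const_sub (π/4)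
    · intro t ht; rw [one_mul, abs_neg]; exact habs' (x t) _
    · show 0 < π/4 - x 0; linarith [hx0.2]
  have hy4' : ∀ t ∈ Ici (0:ℝ), 0 < π/4 - y t := by
    apply pos_persist zero_le_one (w := fun t => π/4 - y t)
      (g := fun t => -(F (y t) * Real.sin (π/4 - 2 * x t)))
    · exact fun t ht => (hy t ht).const_sub (π/4)
    · intro t ht; rw [one_mul, abs_neg]; exact habs' (y t) _
    · show 0 < π/4 - y 0; linarith [hy0.2]
  have hx4 : ∀ t ∈ Ici (0:ℝ), x t < π/4 := fun t ht => by linarith [hx4' t ht]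
  have hD : ∀ t ∈ Ici (0:ℝ), 0 < y t - x t := by
    apply pos_persist (K := 3) (by norm_num) (w := fun t => y t - x t)
      (g := fun t => F (y t) * Real.sin (π/4 - 2*x t) - F (x t) * Real.sin (π/4 - 2*y t))
    · exact fun t ht => (hy t ht).sub (hx t ht)
    · intro t ht
      show |F (y t) * Real.sin (π/4 - 2*x t) - F (x t) * Real.sin (π/4 - 2*y t)|
        ≤ 3 * |y t - x t|
      have h1 : |(F (y t) - F (x t)) * Real.sin (π/4 - 2*x t)| ≤ |y t - x t| := by
        rw [abs_mul]
        calc |F (y t) - F (x t)| * |Real.sin (π/4 - 2*x t)| ≤ |y t - x t| * 1 :=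
            mul_le_mul (F_lip _ _) (abs_sin_le_one' _) (abs_nonneg _) (abs_nonneg _)
          _ = |y t - x t| := mul_one _
      have h2 : |F (x t) * (Real.sin (π/4 - 2*x t) - Real.sin (π/4 - 2*y t))|
          ≤ 2 * |y t - x t| := by
        rw [abs_mul]
        have hs : |Real.sin (π/4 - 2*x t) - Real.sin (π/4 - 2*y t)| ≤ 2 * |y t - x t| := by
          have h := abs_sin_sub_sin_le (π/4 - 2*x t) (π/4 - 2*y t)
          rw [show (π/4 - 2*x t) - (π/4 - 2*y t) = 2*(y t - x t) by ring, abs_mul,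
            abs_of_nonneg (by norm_num : (0:ℝ) ≤ 2)] at h
          exact h
        calc |F (x t)| * |Real.sin (π/4 - 2*x t) - Real.sin (π/4 - 2*y t)|
            ≤ 1 * (2 * |y t - x t|) :=
              mul_le_mul (abs_F_le_one _) hs (abs_nonneg _) zero_le_one
          _ = 2 * |y t - x t| := one_mul _
      calc |F (y t) * Real.sin (π/4 - 2*x t) - F (x t) * Real.sin (π/4 - 2*y t)|
          = |(F (y t) - F (x t)) * Real.sin (π/4 - 2*x t)
              + F (x t) * (Real.sin (π/4 - 2*x t) - Real.sin (π/4 - 2*y t))| := by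
            congr 1; ring
        _ ≤ |(F (y t) - F (x t)) * Real.sin (π/4 - 2*x t)|
              + |F (x t) * (Real.sin (π/4 - 2*x t) - Real.sin (π/4 - 2*y t))| := abs_add_le _ _
        _ ≤ |y t - x t| + 2 * |y t - x t| := add_le_add h1 h2
        _ = 3 * |y t - x t| := by ring
    · show 0 < y 0 - x 0; linarith
  have hcons : ∀ t ∈ Ici (0:ℝ), F (x t) * F (y 0) = F (x 0) * F (y t) := by
    have hz := eq_zero_persist (R := fun t => F (x t) * F (y 0) - F (x 0) * F (y t))
      (g := fun t => Real.sin (π/4 - 2*x t) * (F (x t) * Real.sin (π/4 - 2*y t)) * F (y 0)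
        - F (x 0) * (Real.sin (π/4 - 2*y t) * (F (y t) * Real.sin (π/4 - 2*x t))))
      ?_ ?_ ?_
    · intro t ht
      have := hz t ht
      linarith
    · intro t ht
      have h1 := ((hasDerivAt_F (x t)).comp_hasDerivWithinAt t (hx t ht)).mul_const (F (y 0))
      have h2 := ((hasDerivAt_F (y t)).comp_hasDerivWithinAt t (hy t ht)).const_mul (F (x 0))
      exact h1.sub h2
    · intro t ht
      show |Real.sin (π/4 - 2*x t) * (F (x t) * Real.sin (π/4 - 2*y t)) * F (y 0)
        - F (x 0) * (Real.sin (π/4 - 2*y t) * (F (y t) * Real.sin (π/4 - 2*x t)))|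
        ≤ |F (x t) * F (y 0) - F (x 0) * F (y t)|
      rw [show Real.sin (π/4 - 2*x t) * (F (x t) * Real.sin (π/4 - 2*y t)) * F (y 0)
        - F (x 0) * (Real.sin (π/4 - 2*y t) * (F (y t) * Real.sin (π/4 - 2*x t)))
        = (Real.sin (π/4 - 2*x t) * Real.sin (π/4 - 2*y t))
            * (F (x t) * F (y 0) - F (x 0) * F (y t)) by ring, abs_mul]
      calc |Real.sin (π/4 - 2*x t) * Real.sin (π/4 - 2*y t)|
            * |F (x t) * F (y 0) - F (x 0) * F (y t)|
          ≤ 1 * |F (x t) * F (y 0) - F (x 0) * F (y t)| := by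
            apply mul_le_mul_of_nonneg_right _ (abs_nonneg _)
            rw [abs_mul]
            calc |Real.sin (π/4 - 2*x t)| * |Real.sin (π/4 - 2*y t)| ≤ 1 * 1 :=
                mul_le_mul (abs_sin_le_one' _) (abs_sin_le_one' _) (abs_nonneg _) zero_le_one
              _ = 1 := one_mul 1
        _ = |F (x t) * F (y 0) - F (x 0) * F (y t)| := one_mul _
    · show F (x 0) * F (y 0) - F (x 0) * F (y 0) = 0; ring
  have hA0 : 0 < F (x 0) := F_pos hx0.1 hx0.2
  have hB0 : 0 < F (y 0) := F_pos hy0.1 hy0.2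
  have hF8 : 0 < F (π/8) := F_pos (by linarith) (by linarith)
  have hFxpos : ∀ t ∈ Ici (0:ℝ), 0 < F (x t) :=
    fun t ht => F_pos (hxpos t ht) (by linarith [hx4' t ht])
  have hFypos : ∀ t ∈ Ici (0:ℝ), 0 < F (y t) :=
    fun t ht => F_pos (hypos t ht) (by linarith [hy4' t ht])
  rcases lt_trichotomy (F (x 0)) (F (y 0)) with hAB | hAB | hAB
  · -- E₀ < 1 : x stays below π/8, y crosses π/8 in finite time
    have hxlt8 : ∀ t ∈ Ici (0:ℝ), x t < π/8 := by
      intro t ht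
      by_contra h
      push_neg at h
      have h1 : F (y t) < F (x t) :=
        F_lt_right h (by linarith [hD t ht]) (by linarith [hy4' t ht])
      have hc := hcons t ht
      nlinarith [hFxpos t ht, hFypos t ht]
    set q := F (x 0) / F (y 0) with hqdef
    have hq1 : q < 1 := (div_lt_one hB0).mpr hAB
    have hq0 : 0 < q := div_pos hA0 hB0
    set η := (1 - q) * F (π/8) with hηdef
    have hη : 0 < η := mul_pos (by linarith) hF8
    have hsinx : ∀ t ∈ Ici (0:ℝ),
        Real.sin (2*Real.sqrt η) ≤ Real.sin (π/4 - 2*x t)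
        ∧ 0 < Real.sin (2*Real.sqrt η) := by
      intro t ht
      have hFle : F (x t) ≤ q * F (π/8) := by
        have hc := hcons t ht
        have h1 : F (y t) ≤ F (π/8) := F_le_F_pi_div_eight _
        rw [hqdef, div_mul_eq_mul_div, le_div_iff₀ hB0]
        calc F (x t) * F (y 0) = F (x 0) * F (y t) := hc
          _ ≤ F (x 0) * F (π/8) := by nlinarith
      have hcos := cos_bound_of_F_le hFle
      have hθ0 : 0 < π/4 - 2*x t := by linarith [hxlt8 t ht]
      have hθ4 : π/4 - 2*x t ≤ π/4 := by linarith [hxpos t ht]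
      have hcos' : Real.cos (π/4 - 2*x t) ≤ 1 - 2*η := by
        rw [show π/4 - 2*x t = -(2*x t - π/4) by ring, Real.cos_neg]
        exact hcos
      exact sqrt_step hθ0 hθ4 hη hcos'
    have hm' : 0 < Real.sin (2*Real.sqrt η) := (hsinx 0 self_mem_Ici).2
    have hymono : MonotoneOn y (Ici 0) := by
      apply monoOn le_rfl hy
      intro t ht'
      have ht : t ∈ Ici (0:ℝ) := ht'.le
      have h1 := (hsinx t ht).1
      nlinarith [hFypos t ht]
    set r := Real.sin (2*Real.sqrt η) * F (y 0) with hrdef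
    have hr : 0 < r := mul_pos hm' hB0
    set T₁ := (π/8)/r with hT₁def
    have hT₁ : 0 ≤ T₁ := by positivity
    have hT₁m : T₁ ∈ Ici (0:ℝ) := hT₁
    have hyT₁ : π/8 < y T₁ := by
      by_contra hcon
      push_neg at hcon
      have hgain := gain (r := r) hT₁ hy ?_
      · have hrT : r * T₁ = π/8 := by
          rw [hT₁def]; field_simp
        rw [hrT] at hgain
        linarith [hy0.1]
      · intro u hu0 huT
        have hu : u ∈ Ici (0:ℝ) := hu0.le
        have h1 : y u ≤ y T₁ := hymono hu hT₁m huT.le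
        have h2 : y 0 ≤ y u := hymono self_mem_Ici hu hu0.le
        have hFyu : F (y 0) ≤ F (y u) := F_le_left hy0.1.le h2 (by linarith)
        have hs := (hsinx u hu).1
        nlinarith [hFypos u hu]
    have hm : 0 < Real.sin (2*y T₁ - π/4) :=
      Real.sin_pos_of_pos_of_lt_pi (by linarith) (by linarith [hy4' T₁ hT₁m])
    have hsin : ∀ t, T₁ ≤ t → Real.sin (π/4 - 2*y t) ≤ -Real.sin (2*y T₁ - π/4) := by
      intro t ht
      have htm : t ∈ Ici (0:ℝ) := hT₁.trans ht
      have h1 : y T₁ ≤ y t := hymono hT₁m htm ht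
      have h3 : Real.sin (2*y T₁ - π/4) ≤ Real.sin (2*y t - π/4) :=
        sin_mono (by linarith) (by linarith) (by linarith [hy4' t htm])
      rw [show π/4 - 2*y t = -(2*y t - π/4) by ring, Real.sin_neg]
      linarith
    exact endgame hx hxpos hT₁ hm (by linarith : (0:ℝ) < π/8) (by linarith) hx4
      (fun t ht => (hxlt8 t (hT₁.trans ht)).le) hsin
  · -- E₀ = 1 : the trajectory lies on the line y = π/4 - x
    have hxlt8 : ∀ t ∈ Ici (0:ℝ), x t < π/8 := by
      intro t ht
      by_contra h
      push_neg at h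
      have h1 : F (y t) < F (x t) :=
        F_lt_right h (by linarith [hD t ht]) (by linarith [hy4' t ht])
      have hc := hcons t ht
      rw [← hAB] at hc
      nlinarith [hFxpos t ht, hFypos t ht]
    have hyeq : ∀ t ∈ Ici (0:ℝ), y t = π/4 - x t := by
      intro t ht
      have hc := hcons t ht
      rw [← hAB] at hc
      have hFeq : F (x t) = F (y t) := by
        have h' : F (x 0) * F (x t) = F (x 0) * F (y t) := by linarith [hc]
        exact mul_left_cancel₀ (ne_of_gt hA0) h'
      have h1 : Real.cos (2*x t - π/4) = Real.cos (2*y t - π/4) := by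
        have e1 := F_eq (x t)
        have e2 := F_eq (y t)
        rw [e1, e2] at hFeq
        linarith
      have hxt := hxpos t ht
      have hxt8 := hxlt8 t ht
      have hyt : x t < y t := by linarith [hD t ht]
      have hyt4 : y t < π/4 := by linarith [hy4' t ht]
      have h2 : Real.cos |2*x t - π/4| = Real.cos |2*y t - π/4| := by
        rw [Real.cos_abs, Real.cos_abs]; exact h1
      have h3 : |2*x t - π/4| = |2*y t - π/4| := by
        apply Real.injOn_cos ⟨abs_nonneg _, ?_⟩ ⟨abs_nonneg _, ?_⟩ h2
        · rw [abs_of_nonpos (by linarith)]; linarith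
        · rcases abs_cases (2*y t - π/4) with ⟨he, _⟩ | ⟨he, _⟩ <;> rw [he] <;>
            linarith [hypos t ht]
      rw [abs_of_nonpos (by linarith)] at h3
      rcases abs_cases (2*y t - π/4) with ⟨he, _⟩ | ⟨he, _⟩
      · rw [he] at h3; linarith
      · rw [he] at h3; exfalso; linarith
    have hxanti : AntitoneOn x (Ici 0) := by
      apply antiOn le_rfl hx
      intro t ht'
      have ht : t ∈ Ici (0:ℝ) := ht'.le
      have h1 := hyeq t ht
      have hspos : 0 < Real.sin (π/4 - 2*x t) :=
        Real.sin_pos_of_pos_of_lt_pi (by linarith [hxlt8 t ht]) (by linarith [hxpos t ht])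
      rw [h1, show π/4 - 2*(π/4 - x t) = -(π/4 - 2*x t) by ring, Real.sin_neg]
      nlinarith [hFxpos t ht]
    have hx08 : x 0 < π/8 := hxlt8 0 self_mem_Ici
    have hm : 0 < Real.sin (π/4 - 2*x 0) :=
      Real.sin_pos_of_pos_of_lt_pi (by linarith) (by linarith [hx0.1])
    have hsin : ∀ t, 0 ≤ t → Real.sin (π/4 - 2*y t) ≤ -Real.sin (π/4 - 2*x 0) := by
      intro t ht
      have htm : t ∈ Ici (0:ℝ) := ht
      have h1 := hyeq t htm
      have hxle : x t ≤ x 0 := hxanti self_mem_Ici htm ht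
      have h3 : Real.sin (π/4 - 2*x 0) ≤ Real.sin (π/4 - 2*x t) :=
        sin_mono (by linarith) (by linarith) (by linarith [hxpos t htm])
      rw [h1, show π/4 - 2*(π/4 - x t) = -(π/4 - 2*x t) by ring, Real.sin_neg]
      linarith
    exact endgame hx hxpos le_rfl hm hx0.1 hx0.2 hx4
      (fun t ht => hxanti self_mem_Ici ht ht) hsin
  · -- E₀ > 1 : y stays above π/8 uniformly
    have hygt8 : ∀ t ∈ Ici (0:ℝ), π/8 < y t := by
      intro t ht
      by_contra h
      push_neg at h
      have h1 : F (x t) < F (y t) :=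
        F_lt_left (hxpos t ht).le (by linarith [hD t ht]) h
      have hc := hcons t ht
      nlinarith [hFxpos t ht, hFypos t ht]
    set q := F (y 0) / F (x 0) with hqdef
    have hq1 : q < 1 := (div_lt_one hA0).mpr hAB
    set η := (1 - q) * F (π/8) with hηdef
    have hη : 0 < η := mul_pos (by linarith) hF8
    have hsiny : ∀ t ∈ Ici (0:ℝ),
        Real.sin (π/4 - 2*y t) ≤ -Real.sin (2*Real.sqrt η)
        ∧ 0 < Real.sin (2*Real.sqrt η) := by
      intro t ht
      have hFle : F (y t) ≤ q * F (π/8) := by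
        have hc := hcons t ht
        have h1 : F (x t) ≤ F (π/8) := F_le_F_pi_div_eight _
        rw [hqdef, div_mul_eq_mul_div, le_div_iff₀ hA0]
        calc F (y t) * F (x 0) = F (y 0) * F (x t) := by linarith [hc]
          _ ≤ F (y 0) * F (π/8) := by nlinarith
      have hcos := cos_bound_of_F_le hFle
      have hθ0 : 0 < 2*y t - π/4 := by linarith [hygt8 t ht]
      have hθ4 : 2*y t - π/4 ≤ π/4 := by linarith [hy4' t ht]
      have hstep := sqrt_step hθ0 hθ4 hη hcos
      refine ⟨?_, hstep.2⟩
      rw [show π/4 - 2*y t = -(2*y t - π/4) by ring, Real.sin_neg]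
      linarith [hstep.1]
    have hm : 0 < Real.sin (2*Real.sqrt η) := (hsiny 0 self_mem_Ici).2
    have hxanti : AntitoneOn x (Ici 0) := by
      apply antiOn le_rfl hx
      intro t ht'
      have ht : t ∈ Ici (0:ℝ) := ht'.le
      have hs := (hsiny t ht).1
      nlinarith [hFxpos t ht]
    exact endgame hx hxpos le_rfl hm hx0.1 hx0.2 hx4
      (fun t ht => hxanti self_mem_Ici ht ht) (fun t ht => (hsiny t ht).1)
end CFE

/-- cusp formation in infinite time at an exponential rate for the
two-sector angle dynamics: with `ζ₁(0) + ζ₂(0) = π/4` and `γ(0) ≠ ζ₂(0)`, one of the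
two sector angles decays exponentially to zero. -/
theorem cusp_formation_exponential
    (ζ₁ ζ₂ γ : ℝ → ℝ)
    (hζ₁ : ∀ t ∈ Set.Ici (0 : ℝ), HasDerivWithinAt ζ₁
      (-Real.sin (ζ₁ t) * Real.sin (ζ₂ t) * Real.cos (2 * γ t + ζ₁ t + ζ₂ t))
      (Set.Ici (0 : ℝ)) t)
    (hζ₂ : ∀ t ∈ Set.Ici (0 : ℝ), HasDerivWithinAt ζ₂
      (Real.sin (ζ₂ t) * Real.sin (ζ₁ t) * Real.cos (2 * γ t + ζ₁ t + ζ₂ t))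
      (Set.Ici (0 : ℝ)) t)
    (hγ : ∀ t ∈ Set.Ici (0 : ℝ), HasDerivWithinAt γ
      (Real.sin (γ t) * Real.sin (ζ₁ t - ζ₂ t) * Real.cos (γ t + ζ₁ t + ζ₂ t))
      (Set.Ici (0 : ℝ)) t)
    (hζ₁0 : ζ₁ 0 ∈ Set.Ioo 0 (π / 4)) (hζ₂0 : ζ₂ 0 ∈ Set.Ioo 0 (π / 4))
    (hγ0 : γ 0 ∈ Set.Ioo 0 (π / 4))
    (hsum : ζ₁ 0 + ζ₂ 0 = π / 4) (hne : γ 0 ≠ ζ₂ 0) :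
    (γ 0 < ζ₂ 0 → ∃ C c : ℝ, 0 < C ∧ 0 < c ∧
      ∀ t ∈ Set.Ici (0 : ℝ), 0 < ζ₁ t ∧ ζ₁ t ≤ C * Real.exp (-c * t)) ∧
    (ζ₂ 0 < γ 0 → ∃ C c : ℝ, 0 < C ∧ 0 < c ∧
      ∀ t ∈ Set.Ici (0 : ℝ), 0 < ζ₂ t ∧ ζ₂ t ≤ C * Real.exp (-c * t)) := by
  have hπ := Real.pi_pos
  have hsum_t : ∀ t ∈ Set.Ici (0:ℝ), ζ₁ t + ζ₂ t = π/4 := by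
    intro T hT
    have hcont : ContinuousOn (fun t => ζ₁ t + ζ₂ t) (Icc 0 T) :=
      fun u hu => (((hζ₁ u hu.1).continuousWithinAt).add
        ((hζ₂ u hu.1).continuousWithinAt)).mono (fun v hv => hv.1)
    have hderiv : ∀ u ∈ Ico (0:ℝ) T, HasDerivWithinAt (fun t => ζ₁ t + ζ₂ t) 0 (Ici u) u := by
      intro u hu
      have h := ((hζ₁ u hu.1).add (hζ₂ u hu.1)).mono (Ici_subset_Ici.mpr hu.1)
      have e : (0:ℝ) = -Real.sin (ζ₁ u) * Real.sin (ζ₂ u) * Real.cos (2 * γ u + ζ₁ u + ζ₂ u)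
          + Real.sin (ζ₂ u) * Real.sin (ζ₁ u) * Real.cos (2 * γ u + ζ₁ u + ζ₂ u) := by ring
      rw [e]; exact h
    have h := constant_of_has_deriv_right_zero hcont hderiv T ⟨hT, le_refl T⟩
    rw [hsum] at h
    exact h
  have hx' : ∀ t ∈ Set.Ici (0:ℝ), HasDerivWithinAt ζ₂
      (CFE.F (ζ₂ t) * Real.sin (π/4 - 2 * γ t)) (Set.Ici 0) t := by
    intro t ht
    have h := hζ₂ t ht
    have hs := hsum_t t ht
    have he : Real.sin (ζ₂ t) * Real.sin (ζ₁ t) * Real.cos (2 * γ t + ζ₁ t + ζ₂ t)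
        = CFE.F (ζ₂ t) * Real.sin (π/4 - 2 * γ t) := by
      have h1 : ζ₁ t = π/4 - ζ₂ t := by linarith
      rw [h1, CFE.F]
      rw [show 2 * γ t + (π/4 - ζ₂ t) + ζ₂ t = π/2 - (π/4 - 2*γ t) by ring,
        Real.cos_pi_div_two_sub]
    rwa [he] at h
  have hy' : ∀ t ∈ Set.Ici (0:ℝ), HasDerivWithinAt γ
      (CFE.F (γ t) * Real.sin (π/4 - 2 * ζ₂ t)) (Set.Ici 0) t := by
    intro t ht
    have h := hγ t ht
    have hs := hsum_t t ht
    have he : Real.sin (γ t) * Real.sin (ζ₁ t - ζ₂ t) * Real.cos (γ t + ζ₁ t + ζ₂ t)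
        = CFE.F (γ t) * Real.sin (π/4 - 2 * ζ₂ t) := by
      have h1 : ζ₁ t = π/4 - ζ₂ t := by linarith
      rw [h1, CFE.F]
      rw [show π/4 - ζ₂ t - ζ₂ t = π/4 - 2*ζ₂ t by ring]
      rw [show γ t + (π/4 - ζ₂ t) + ζ₂ t = π/2 - (π/4 - γ t) by ring,
        Real.cos_pi_div_two_sub]
      ring
    rwa [he] at h
  have hz' : ∀ t ∈ Set.Ici (0:ℝ), HasDerivWithinAt ζ₁
      (CFE.F (ζ₁ t) * Real.sin (π/4 - 2 * (π/4 - γ t))) (Set.Ici 0) t := by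
    intro t ht
    have h := hζ₁ t ht
    have hs := hsum_t t ht
    have he : -Real.sin (ζ₁ t) * Real.sin (ζ₂ t) * Real.cos (2 * γ t + ζ₁ t + ζ₂ t)
        = CFE.F (ζ₁ t) * Real.sin (π/4 - 2 * (π/4 - γ t)) := by
      have h1 : ζ₂ t = π/4 - ζ₁ t := by linarith
      rw [h1, CFE.F]
      rw [show 2 * γ t + ζ₁ t + (π/4 - ζ₁ t) = π/2 - (π/4 - 2*γ t) by ring,
        Real.cos_pi_div_two_sub]
      rw [show π/4 - 2*(π/4 - γ t) = -(π/4 - 2*γ t) by ring, Real.sin_neg]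
      ring
    rwa [he] at h
  have hw' : ∀ t ∈ Set.Ici (0:ℝ), HasDerivWithinAt (fun t => π/4 - γ t)
      (CFE.F (π/4 - γ t) * Real.sin (π/4 - 2 * ζ₁ t)) (Set.Ici 0) t := by
    intro t ht
    have h := (hy' t ht).const_sub (π/4)
    have hs := hsum_t t ht
    have he : -(CFE.F (γ t) * Real.sin (π/4 - 2 * ζ₂ t))
        = CFE.F (π/4 - γ t) * Real.sin (π/4 - 2 * ζ₁ t) := by
      have h1 : ζ₁ t = π/4 - ζ₂ t := by linarith
      rw [h1, CFE.F, CFE.F]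
      rw [show π/4 - (π/4 - γ t) = γ t by ring]
      rw [show π/4 - 2*(π/4 - ζ₂ t) = -(π/4 - 2*ζ₂ t) by ring, Real.sin_neg]
      ring
    rwa [he] at h
  constructor
  · intro hlt
    exact CFE.main_lemma hz' hw' hζ₁0
      ⟨by linarith [hγ0.2], by linarith [hγ0.1]⟩ (by linarith)
  · intro hlt
    exact CFE.main_lemma hx' hy' hζ₂0 hγ0 hlt
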